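/- Reduction to cone-constant witnesses (Lemma C.2): For any v̄ ∈ F_B there exists v̄′ ∈ F_B such that γ_{v̄′}(X,Y) = γ_{v̄}(X,Y) and v̄′ is constant on the cone C(U) for every U ⊆ [n]. -/

import Mathlib

open MeasureTheory ProbabilityTheory
open scoped BigOperators ENNReal

noncomputable section

abbrev E (d : ℕ) : Type := EuclideanSpace ℝ (Fin d)

/-- The standard Gaussian measure `N(0, I_d)` on `ℝ^d`. -/
def stdGaussian (d : ℕ) : Measure (E d) :=
  (Measure.pi fun _ : Fin d => gaussianReal 0 1).map
    (⇑(EuclideanSpace.equiv (Fin d) ℝ).symm)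

/-- The set `F_B` of vector fields bounded by 1 in norm. -/
def FB (d : ℕ) : Set (E d → E d) := {v | ∀ z, ‖v z‖ ≤ 1}

/-- `∫ ⟨v(z), x⟩ 𝟙[⟨x,z⟩>0] dμ_N(z)`. -/
def mIntegral (d : ℕ) (v : E d → E d) (x : E d) : ℝ :=
  ∫ z, (if 0 < (inner ℝ x z : ℝ) then (inner ℝ (v z) x : ℝ) else 0) ∂(stdGaussian d)

/-- The margin `γ_v̄(X,Y)`. -/
def marginV (d n : ℕ) (x : Fin n → E d) (y : Fin n → ℝ) (v : E d → E d) : ℝ :=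
  ⨅ i, y i * mIntegral d v (x i)

/-- The margin `γ(X,Y) = max_{v̄ ∈ F_B} γ_v̄(X,Y)`. -/
def gammaM (d n : ℕ) (x : Fin n → E d) (y : Fin n → ℝ) : ℝ :=
  ⨆ v ∈ FB d, marginV d n x y v

end
noncomputable section

/-- The cone `C(U) = {z : ⟨z, x_i⟩ > 0 ↔ i ∈ U}`. -/
def coneC (d n : ℕ) (x : Fin n → E d) (U : Set (Fin n)) : Set (E d) :=
  {z | ∀ i, 0 < (inner ℝ (x i) z : ℝ) ↔ i ∈ U}

/- ### Auxiliary material -/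

instance (d : ℕ) : IsProbabilityMeasure (stdGaussian d) :=
  Measure.isProbabilityMeasure_map
    ((EuclideanSpace.equiv (Fin d) ℝ).symm.continuous.measurable.aemeasurable)

namespace ConeConstAux

variable {d n : ℕ}

/-- The integrand appearing in `mIntegral`. -/
def itg (x : Fin n → E d) (v : E d → E d) (i : Fin n) : E d → ℝ :=
  fun z => if 0 < (inner ℝ (x i) z : ℝ) then (inner ℝ (v z) (x i) : ℝ) else 0

lemma mIntegral_eq (x : Fin n → E d) (v : E d → E d) (i : Fin n) :
    mIntegral d v (x i) = ∫ z, itg x v i z ∂(stdGaussian d) := rfl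

lemma measurableSet_coneC (x : Fin n → E d) (U : Set (Fin n)) :
    MeasurableSet (coneC d n x U) := by
  have h : coneC d n x U = ⋂ i, {z : E d | 0 < (inner ℝ (x i) z : ℝ) ↔ i ∈ U} := by
    ext z; simp [coneC, Set.mem_iInter]
  rw [h]
  refine MeasurableSet.iInter fun i => ?_
  have hm : MeasurableSet {z : E d | 0 < (inner ℝ (x i) z : ℝ)} :=
    measurableSet_lt measurable_const (continuous_const.inner continuous_id).measurable
  by_cases hi : i ∈ U
  · have : {z : E d | 0 < (inner ℝ (x i) z : ℝ) ↔ i ∈ U}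
        = {z : E d | 0 < (inner ℝ (x i) z : ℝ)} := by ext z; simp [hi]
    rw [this]; exact hm
  · have : {z : E d | 0 < (inner ℝ (x i) z : ℝ) ↔ i ∈ U}
        = {z : E d | 0 < (inner ℝ (x i) z : ℝ)}ᶜ := by ext z; simp [hi]
    rw [this]; exact hm.compl

/-- The set of indices whose halfspace contains `z`. -/
def posSet (x : Fin n → E d) (z : E d) : Set (Fin n) := {i | 0 < (inner ℝ (x i) z : ℝ)}

lemma mem_coneC_posSet (x : Fin n → E d) (z : E d) : z ∈ coneC d n x (posSet x z) :=
  fun _ => Iff.rfl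

lemma posSet_eq {x : Fin n → E d} {U : Set (Fin n)} {z : E d}
    (hz : z ∈ coneC d n x U) : posSet x z = U :=
  Set.ext fun i => hz i

lemma pairwise_disjoint_coneC (x : Fin n → E d) :
    Pairwise (Function.onFun Disjoint fun U : Set (Fin n) => coneC d n x U) := by
  intro U V hUV
  rw [Function.onFun, Set.disjoint_left]
  intro z hzU hzV
  exact hUV ((posSet_eq hzU).symm.trans (posSet_eq hzV))

lemma iUnion_coneC (x : Fin n → E d) :
    (⋃ U : Set (Fin n), coneC d n x U) = Set.univ :=
  Set.eq_univ_of_forall fun z => Set.mem_iUnion.2 ⟨posSet x z, mem_coneC_posSet x z⟩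

variable (x : Fin n → E d) (v : E d → E d) (G : Set (Fin n))

/-- Span of the `x i`, `i ∈ U ∩ G`. -/
def coneSpan (U : Set (Fin n)) : Submodule ℝ (E d) :=
  Submodule.span ℝ (x '' (U ∩ G))

/-- The average of `v` over the cone `C(U)` (component-wise along an orthonormal basis
of `coneSpan`). -/
def coneVec (U : Set (Fin n)) : E d :=
  ((stdGaussian d) (coneC d n x U)).toReal⁻¹ •
    ∑ k, (∫ z in coneC d n x U,
        (inner ℝ (v z) ((stdOrthonormalBasis ℝ (coneSpan x G U)) k : E d) : ℝ)
          ∂(stdGaussian d)) •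
      ((stdOrthonormalBasis ℝ (coneSpan x G U)) k : E d)

/-- The cone-constant function built from `v`. -/
def coneConst : E d → E d := fun z => coneVec x v G (posSet x z)

variable {x v G}

lemma integrableOn_inner_coneSpan
    (hG : ∀ i ∈ G, Integrable (itg x v i) (stdGaussian d)) (U : Set (Fin n))
    {u : E d} (hu : u ∈ coneSpan x G U) :
    IntegrableOn (fun z => (inner ℝ (v z) u : ℝ)) (coneC d n x U) (stdGaussian d) := by
  induction hu using Submodule.span_induction with
  | mem u hu =>
      obtain ⟨i, ⟨hiU, hiG⟩, rfl⟩ := hu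
      refine ((hG i hiG).integrableOn).congr_fun ?_ (measurableSet_coneC x U)
      intro z hz
      exact if_pos ((hz i).mpr hiU)
  | zero =>
      simp only [inner_zero_right]
      exact integrableOn_zero
  | add u w hu hw ihu ihw =>
      simp only [inner_add_right]
      exact ihu.add ihw
  | smul a u hu ihu =>
      simp only [real_inner_smul_right]
      exact ihu.const_mul a

lemma key (hG : ∀ i ∈ G, Integrable (itg x v i) (stdGaussian d)) (U : Set (Fin n))
    {u : E d} (hu : u ∈ coneSpan x G U) :
    ((stdGaussian d) (coneC d n x U)).toReal * (inner ℝ (coneVec x v G U) u : ℝ)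
      = ∫ z in coneC d n x U, (inner ℝ (v z) u : ℝ) ∂(stdGaussian d) := by
  set μ := stdGaussian d
  by_cases h0 : μ (coneC d n x U) = 0
  · rw [h0, ENNReal.toReal_zero, zero_mul,
      Measure.restrict_eq_zero.mpr h0, integral_zero_measure]
  · set S := coneSpan x G U
    set b := stdOrthonormalBasis ℝ S with hb
    set μU := (μ (coneC d n x U)).toReal with hμU
    have hμUne : μU ≠ 0 :=
      ENNReal.toReal_ne_zero.mpr ⟨h0, measure_ne_top _ _⟩
    set us : S := ⟨u, hu⟩ with hus
    have hexp : u = ∑ k, (inner ℝ ((b k : E d)) u : ℝ) • ((b k) : E d) := by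
      have h1 : us = ∑ k, (inner ℝ ((b k : E d)) u : ℝ) • b k := by
        conv_lhs => rw [← b.sum_repr us]
        refine Finset.sum_congr rfl fun k _ => ?_
        congr 1
        rw [b.repr_apply_apply us k]
        rfl
      calc u = ((us : S) : E d) := rfl
        _ = ∑ k, (inner ℝ ((b k : E d)) u : ℝ) • ((b k) : E d) := by
            rw [h1]; push_cast; rfl
    have hint : ∀ k, IntegrableOn (fun z => (inner ℝ (v z) ((b k : E d)) : ℝ))
        (coneC d n x U) μ :=
      fun k => integrableOn_inner_coneSpan hG U (SetLike.coe_mem (b k))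
    have hRHS : ∫ z in coneC d n x U, (inner ℝ (v z) u : ℝ) ∂μ
        = ∑ k, (inner ℝ ((b k : E d)) u : ℝ) *
            ∫ z in coneC d n x U, (inner ℝ (v z) ((b k : E d)) : ℝ) ∂μ := by
      conv_lhs => rw [hexp]
      simp_rw [inner_sum, real_inner_smul_right]
      rw [integral_finset_sum]
      · exact Finset.sum_congr rfl fun k _ => integral_const_mul _ _
      · exact fun k _ => ((hint k).const_mul _)
    have hLHS : (inner ℝ (coneVec x v G U) u : ℝ)
        = μU⁻¹ * ∑ k, (∫ z in coneC d n x U,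
            (inner ℝ (v z) ((b k : E d)) : ℝ) ∂μ) * (inner ℝ ((b k : E d)) u : ℝ) := by
      rw [coneVec, real_inner_smul_left, sum_inner]
      simp_rw [real_inner_smul_left]
      rfl
    rw [hLHS, hRHS, ← mul_assoc, mul_inv_cancel₀ hμUne, one_mul]
    exact Finset.sum_congr rfl fun k _ => mul_comm _ _

lemma coneVec_mem (U : Set (Fin n)) : coneVec x v G U ∈ coneSpan x G U := by
  refine Submodule.smul_mem _ _ (Submodule.sum_mem _ fun k _ => ?_)
  exact Submodule.smul_mem _ _ (SetLike.coe_mem _)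

lemma norm_coneVec_le (hv : v ∈ FB d)
    (hG : ∀ i ∈ G, Integrable (itg x v i) (stdGaussian d)) (U : Set (Fin n)) :
    ‖coneVec x v G U‖ ≤ 1 := by
  set μ := stdGaussian d
  by_cases h0 : μ (coneC d n x U) = 0
  · have : coneVec x v G U = 0 := by
      rw [coneVec]
      have hz : (μ.restrict (coneC d n x U)) = 0 := Measure.restrict_eq_zero.mpr h0
      simp [hz, show (stdGaussian d) (coneC d n x U) = 0 from h0]
    rw [this, norm_zero]; norm_num
  · set w := coneVec x v G U with hw
    set μU := (μ (coneC d n x U)).toReal with hμU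
    have hμpos : 0 < μU := ENNReal.toReal_pos h0 (measure_ne_top _ _)
    have hkey := key hG U (coneVec_mem (x := x) (v := v) (G := G) U)
    rw [← hw, ← hμU] at hkey
    have hmono : ∫ z in coneC d n x U, (inner ℝ (v z) w : ℝ) ∂μ
        ≤ ∫ _ in coneC d n x U, ‖w‖ ∂μ := by
      refine setIntegral_mono_on
        (integrableOn_inner_coneSpan hG U (coneVec_mem (x := x) (v := v) (G := G) U))
        (integrableOn_const (measure_ne_top _ _))
        (measurableSet_coneC x U) ?_
      intro z _
      calc (inner ℝ (v z) w : ℝ) ≤ ‖v z‖ * ‖w‖ := real_inner_le_norm _ _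
        _ ≤ 1 * ‖w‖ := by
            exact mul_le_mul_of_nonneg_right (hv z) (norm_nonneg _)
        _ = ‖w‖ := one_mul _
    rw [setIntegral_const] at hmono
    have hsq : μU * ‖w‖ ^ 2 ≤ μU * ‖w‖ := by
      calc μU * ‖w‖ ^ 2 = μU * (inner ℝ w w : ℝ) := by rw [real_inner_self_eq_norm_sq]
        _ = ∫ z in coneC d n x U, (inner ℝ (v z) w : ℝ) ∂μ := hkey
        _ ≤ μU • ‖w‖ := hmono
        _ = μU * ‖w‖ := by rw [smul_eq_mul]
    have h2 : ‖w‖ ^ 2 ≤ ‖w‖ := le_of_mul_le_mul_left hsq hμpos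
    nlinarith [norm_nonneg w]

lemma coneConst_mem_FB (hv : v ∈ FB d)
    (hG : ∀ i ∈ G, Integrable (itg x v i) (stdGaussian d)) :
    coneConst x v G ∈ FB d :=
  fun z => norm_coneVec_le hv hG (posSet x z)

lemma coneConst_const (U : Set (Fin n)) {z₁ z₂ : E d}
    (h₁ : z₁ ∈ coneC d n x U) (h₂ : z₂ ∈ coneC d n x U) :
    coneConst x v G z₁ = coneConst x v G z₂ := by
  rw [coneConst, coneConst, posSet_eq h₁, posSet_eq h₂]

lemma mIntegral_coneConst (hG : ∀ i ∈ G, Integrable (itg x v i) (stdGaussian d))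
    {i : Fin n} (hi : i ∈ G) :
    mIntegral d (coneConst x v G) (x i) = mIntegral d v (x i) := by
  classical
  have : Fintype (Set (Fin n)) := Fintype.ofFinite _
  set μ := stdGaussian d
  set cU : Set (Fin n) → ℝ := fun U =>
    if i ∈ U then (inner ℝ (coneVec x v G U) (x i) : ℝ) else 0 with hcU
  -- Step 1: the new integrand is a finite sum of indicators.
  have hrep : (itg x (coneConst x v G) i)
      = fun z => ∑ U : Set (Fin n), (coneC d n x U).indicator (fun _ => cU U) z := by
    funext z
    rw [Finset.sum_eq_single (posSet x z)]
    · rw [Set.indicator_of_mem (mem_coneC_posSet x z)]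
      by_cases h : 0 < (inner ℝ (x i) z : ℝ)
      · rw [itg, if_pos h]
        simp only [hcU]
        rw [if_pos (show i ∈ posSet x z from h)]
        rfl
      · rw [itg, if_neg h]
        simp only [hcU]
        rw [if_neg (show i ∉ posSet x z from h)]
    · intro U _ hUne
      refine Set.indicator_of_notMem (fun hz => hUne ?_) _
      exact (posSet_eq hz).symm
    · intro h; exact absurd (Finset.mem_univ _) h
  -- Step 2: integrate the indicator sum.
  have hstep2 : mIntegral d (coneConst x v G) (x i)
      = ∑ U : Set (Fin n), (μ (coneC d n x U)).toReal • cU U := by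
    rw [mIntegral_eq, hrep, integral_finset_sum]
    · exact Finset.sum_congr rfl fun U _ =>
        integral_indicator_const (cU U) (measurableSet_coneC x U)
    · exact fun U _ => (integrable_const (cU U)).indicator (measurableSet_coneC x U)
  -- Step 3: decompose the original integral over the cones.
  have hstep3 : mIntegral d v (x i)
      = ∑ U : Set (Fin n), ∫ z in coneC d n x U, itg x v i z ∂μ := by
    have hiOn : IntegrableOn (itg x v i) (⋃ U : Set (Fin n), coneC d n x U) μ := by
      rw [iUnion_coneC x]
      exact (hG i hi).integrableOn
    rw [mIntegral_eq, ← setIntegral_univ, ← iUnion_coneC x,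
      integral_iUnion (fun U => measurableSet_coneC x U) (pairwise_disjoint_coneC x) hiOn,
      tsum_fintype]
  -- Step 4: termwise equality.
  rw [hstep2, hstep3]
  refine Finset.sum_congr rfl fun U _ => ?_
  by_cases hiU : i ∈ U
  · have hx_mem : x i ∈ coneSpan x G U :=
      Submodule.subset_span ⟨i, ⟨hiU, hi⟩, rfl⟩
    have hk := key hG U hx_mem
    simp only [hcU]
    rw [if_pos hiU, smul_eq_mul, hk]
    refine setIntegral_congr_fun (measurableSet_coneC x U) fun z hz => ?_
    exact (if_pos ((hz i).mpr hiU)).symm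
  · simp only [hcU]
    rw [if_neg hiU, smul_zero]
    symm
    have h0 : ∫ z in coneC d n x U, itg x v i z ∂μ
        = ∫ _ in coneC d n x U, (0:ℝ) ∂μ :=
      setIntegral_congr_fun (measurableSet_coneC x U)
        (fun z hz => show itg x v i z = 0 from if_neg (fun h => hiU ((hz i).mp h)))
    rw [h0]
    exact integral_zero _ _

/-- Main construction: a cone-constant element of `F_B` matching `mIntegral` on `G`. -/
lemma construction (hv : v ∈ FB d)
    (hG : ∀ i ∈ G, Integrable (itg x v i) (stdGaussian d)) :
    ∃ v' ∈ FB d, (∀ i ∈ G, mIntegral d v' (x i) = mIntegral d v (x i)) ∧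
      ∀ U : Set (Fin n), ∀ z₁ ∈ coneC d n x U, ∀ z₂ ∈ coneC d n x U, v' z₁ = v' z₂ :=
  ⟨coneConst x v G, coneConst_mem_FB hv hG,
    fun _ hi => mIntegral_coneConst hG hi,
    fun U _ h₁ _ h₂ => coneConst_const U h₁ h₂⟩

lemma mIntegral_smul (t : ℝ) (A : E d → E d) (u : E d) :
    mIntegral d (fun z => t • A z) u = t * mIntegral d A u := by
  rw [mIntegral, mIntegral, ← integral_const_mul]
  congr 1
  funext z
  by_cases h : 0 < (inner ℝ u z : ℝ)
  · rw [if_pos h, if_pos h, real_inner_smul_left]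
  · rw [if_neg h, if_neg h, mul_zero]

lemma mIntegral_zero (u : E d) :
    mIntegral d (fun _ : E d => (0 : E d)) u = 0 := by
  rw [mIntegral]
  have : (fun z : E d => if 0 < (inner ℝ u z : ℝ) then (inner ℝ (0:E d) u : ℝ) else 0)
      = fun _ => (0:ℝ) := by
    funext z; simp
  rw [this, integral_zero]

end ConeConstAux

open ConeConstAux in
/-- **Lemma C.2 (reduction to cone-constant witnesses).** For any `v̄ ∈ F_B` there is
`v̄' ∈ F_B` with the same margin that is constant on each cone `C(U)`, `U ⊆ [n]`. -/
theorem cone_constant_witness (d n : ℕ) (x : Fin n → E d) (y : Fin n → ℝ)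
    (hx : ∀ i, ‖x i‖ = 1) (hy : ∀ i, y i = 1 ∨ y i = -1)
    (v : E d → E d) (hv : v ∈ FB d) :
    ∃ v' ∈ FB d, marginV d n x y v' = marginV d n x y v ∧
      ∀ U : Set (Fin n), ∀ z₁ ∈ coneC d n x U, ∀ z₂ ∈ coneC d n x U, v' z₁ = v' z₂ := by
  classical
  set μ := stdGaussian d
  set c : Fin n → ℝ := fun i => mIntegral d v (x i) with hc
  by_cases hall : ∀ i, Integrable (itg x v i) (stdGaussian d)
  · obtain ⟨v', hv', heq, hconst⟩ := construction hv (G := Set.univ) (fun i _ => hall i)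
    refine ⟨v', hv', ?_, hconst⟩
    rw [marginV, marginV]
    exact iInf_congr fun i => by rw [heq i (Set.mem_univ i)]
  · push_neg at hall
    obtain ⟨j, hj⟩ := hall
    have hcj : c j = 0 := by
      rw [hc]
      exact integral_undef hj
    have hne : Nonempty (Fin n) := ⟨j⟩
    have hbdd : BddBelow (Set.range fun i => y i * c i) :=
      (Set.finite_range _).bddBelow
    obtain ⟨i0, hi0⟩ := Finite.exists_min fun i => y i * c i
    have hγeq : marginV d n x y v = y i0 * c i0 :=
      le_antisymm (ciInf_le hbdd i0) (le_ciInf hi0)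
    have hγ0 : marginV d n x y v ≤ 0 := by
      rw [hγeq]
      calc y i0 * c i0 ≤ y j * c j := hi0 j
        _ = 0 := by rw [hcj, mul_zero]
    by_cases hi0g : Integrable (itg x v i0) (stdGaussian d)
    · obtain ⟨A, hA, heqA, hconstA⟩ := construction hv (G := {i0})
        (fun i hi => by rw [Set.mem_singleton_iff] at hi; rw [hi]; exact hi0g)
      have hmA0 : mIntegral d A (x i0) = c i0 := heqA i0 rfl
      set γ' := marginV d n x y A with hγ'
      have hbddA : BddBelow (Set.range fun i => y i * mIntegral d A (x i)) :=
        (Set.finite_range _).bddBelow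
      have hγ'le : γ' ≤ marginV d n x y v := by
        rw [hγeq, ← hmA0]
        exact ciInf_le hbddA i0
      by_cases hz : γ' = 0
      · refine ⟨A, hA, ?_, hconstA⟩
        rw [← hγ']
        have : marginV d n x y v = 0 := le_antisymm hγ0 (hz ▸ hγ'le)
        rw [this, hz]
      · have hγ'neg : γ' < 0 := lt_of_le_of_ne (le_trans hγ'le hγ0) hz
        set t := marginV d n x y v / γ' with ht
        have ht0 : 0 ≤ t := div_nonneg_iff.mpr (Or.inr ⟨hγ0, hγ'neg.le⟩)
        have ht1 : t ≤ 1 := by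
          rw [ht, div_le_one_of_neg hγ'neg]
          exact hγ'le
        refine ⟨fun z => t • A z, ?_, ?_, ?_⟩
        · intro z
          rw [norm_smul, Real.norm_eq_abs, abs_of_nonneg ht0]
          have hAz := hA z
          nlinarith [norm_nonneg (A z)]
        · have : marginV d n x y (fun z => t • A z) = t * γ' := by
            rw [marginV, hγ', marginV, Real.mul_iInf_of_nonneg ht0]
            refine iInf_congr fun i => ?_
            rw [mIntegral_smul]; ring
          rw [this, ht, div_mul_cancel₀ _ hz]
        · intro U z₁ h₁ z₂ h₂
          show t • A z₁ = t • A z₂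
          rw [hconstA U z₁ h₁ z₂ h₂]
    · have hc0 : c i0 = 0 := by rw [hc]; exact integral_undef hi0g
      refine ⟨fun _ => 0, fun z => by rw [norm_zero]; norm_num, ?_, fun _ _ _ _ _ => rfl⟩
      have h1 : marginV d n x y (fun _ : E d => (0:E d)) = 0 := by
        rw [marginV]
        have : ∀ i : Fin n, y i * mIntegral d (fun _ : E d => (0:E d)) (x i) = 0 :=
          fun i => by rw [mIntegral_zero, mul_zero]
        rw [iInf_congr this, ciInf_const]
      rw [h1, hγeq, hc0, mul_zero]

end
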